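/- Let p(·) be an absolute norm on ℝ^N and r(·) an absolute norm on ℝ^N that fits p, i.e., p(x) ≤ 1 implies r([x]²) ≤ 1, where [x]² is the entrywise square. Define the norm p⁺ on S^N by p⁺(Y) = p([p(Col₁[Y]); … ; p(Col_N[Y])]), and let [p⁺]_* and r_* be the norms conjugate to p⁺ (with respect to the Frobenius inner product on S^N) and to r (on ℝ^N), respectively. If V ∈ S^N with V ⪰ 0, and there exist W ∈ S^N and w ∈ ℝ^N with w ≥ 0 such that V ⪯ W + Diag(w) and [p⁺]_*(W) + r_*(w) ≤ τ, then xᵀVx ≤ τ for every x ∈ ℝ^N with p(x) ≤ 1. -/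

import Mathlib

open Matrix

section helpers

variable {n : ℕ} (q : (Fin n → ℝ) → ℝ)

lemma q_zero (q_smul : ∀ (c : ℝ) x, q (c • x) = |c| * q x) : q 0 = 0 := by
  have := q_smul 0 0
  simpa using this

lemma q_nonneg (q_add : ∀ x y, q (x + y) ≤ q x + q y)
    (q_smul : ∀ (c : ℝ) x, q (c • x) = |c| * q x) : ∀ x, 0 ≤ q x := by
  intro x
  have h0 : q 0 = 0 := q_zero q q_smul
  have hneg : q (-x) = q x := by
    have := q_smul (-1) x
    simpa using this
  have := q_add x (-x)
  simp [h0, hneg] at this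
  linarith

lemma q_sum (q_add : ∀ x y, q (x + y) ≤ q x + q y)
    (q_smul : ∀ (c : ℝ) x, q (c • x) = |c| * q x)
    (s : Finset (Fin n)) (f : Fin n → (Fin n → ℝ)) :
    q (∑ i ∈ s, f i) ≤ ∑ i ∈ s, q (f i) := by
  classical
  induction s using Finset.induction with
  | empty => simp [q_zero q q_smul]
  | insert _ _ hx ih =>
    rename_i a s
    rw [Finset.sum_insert hx, Finset.sum_insert hx]
    exact le_trans (q_add _ _) (by linarith)

lemma q_upper (q_add : ∀ x y, q (x + y) ≤ q x + q y)
    (q_smul : ∀ (c : ℝ) x, q (c • x) = |c| * q x) :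
    ∃ C : ℝ, 0 ≤ C ∧ ∀ x, q x ≤ C * ‖x‖ := by
  classical
  refine ⟨∑ i, q (Pi.single i 1), Finset.sum_nonneg fun i _ => q_nonneg q q_add q_smul _, ?_⟩
  intro x
  have hx : x = ∑ i, x i • (Pi.single i (1 : ℝ) : Fin n → ℝ) := by
    funext j
    simp [Pi.single_apply, Finset.sum_ite_eq, mul_comm]
  calc q x = q (∑ i, x i • (Pi.single i (1:ℝ) : Fin n → ℝ)) := by rw [← hx]
    _ ≤ ∑ i, q (x i • (Pi.single i (1:ℝ) : Fin n → ℝ)) := q_sum q q_add q_smul _ _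
    _ = ∑ i, |x i| * q (Pi.single i 1) := by simp [q_smul]
    _ ≤ ∑ i, ‖x‖ * q (Pi.single i 1) := by
        apply Finset.sum_le_sum
        intro i _
        exact mul_le_mul_of_nonneg_right
          (by simpa using norm_le_pi_norm x i) (q_nonneg q q_add q_smul _)
    _ = (∑ i, q (Pi.single i 1)) * ‖x‖ := by rw [← Finset.mul_sum, mul_comm]

lemma q_lower (q_add : ∀ x y, q (x + y) ≤ q x + q y)
    (q_smul : ∀ (c : ℝ) x, q (c • x) = |c| * q x)
    (q_eq_zero : ∀ x, q x = 0 ↔ x = 0) :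
    ∃ c : ℝ, 0 < c ∧ ∀ x, c * ‖x‖ ≤ q x := by
  classical
  rcases Nat.eq_zero_or_pos n with hn | hn
  · refine ⟨1, one_pos, fun x => ?_⟩
    have : x = 0 := by
      funext i; exact absurd i.2 (by omega)
    simp [this, q_zero q q_smul]
  · obtain ⟨C, hC0, hC⟩ := q_upper q q_add q_smul
    have hcont : Continuous q := by
      have hlip : LipschitzWith C.toNNReal q := by
        apply LipschitzWith.of_dist_le_mul
        intro x y
        rw [Real.dist_eq, dist_eq_norm]
        rw [Real.coe_toNNReal _ hC0]
        rw [abs_sub_le_iff]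
        constructor
        · have h1 : q x ≤ q y + q (x - y) := by
            have := q_add y (x - y); simpa using this
          have := hC (x - y)
          linarith
        · have h1 : q y ≤ q x + q (y - x) := by
            have := q_add x (y - x); simpa using this
          have h2 : q (y - x) = q (x - y) := by
            have := q_smul (-1) (x - y)
            simpa [neg_sub] using this
          have := hC (x - y)
          linarith
      exact hlip.continuous
    haveI : Nontrivial (Fin n → ℝ) := by
      refine ⟨fun _ => 0, fun _ => 1, ?_⟩
      intro h
      have := congrFun h ⟨0, hn⟩
      norm_num at this
    have hsph : (Metric.sphere (0 : Fin n → ℝ) 1).Nonempty :=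
      NormedSpace.sphere_nonempty.mpr zero_le_one
    obtain ⟨x₀, hx₀s, hx₀min⟩ :=
      (isCompact_sphere (0 : Fin n → ℝ) 1).exists_isMinOn hsph hcont.continuousOn
    have hx₀norm : ‖x₀‖ = 1 := by simpa using hx₀s
    have hx₀ne : x₀ ≠ 0 := by
      intro h; rw [h] at hx₀norm; simp at hx₀norm
    have hc : 0 < q x₀ := by
      rcases lt_or_eq_of_le (q_nonneg q q_add q_smul x₀) with h | h
      · exact h
      · exact absurd ((q_eq_zero x₀).mp h.symm) hx₀ne
    refine ⟨q x₀, hc, fun x => ?_⟩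
    by_cases hx : x = 0
    · simp [hx, q_zero q q_smul]
    · have hnx : 0 < ‖x‖ := norm_pos_iff.mpr hx
      set y := ‖x‖⁻¹ • x with hy
      have hys : y ∈ Metric.sphere (0 : Fin n → ℝ) 1 := by
        simp [hy, norm_smul, abs_of_pos (inv_pos.mpr hnx), inv_mul_cancel₀ hnx.ne']
      have hqy : q y = ‖x‖⁻¹ * q x := by
        rw [hy, q_smul, abs_of_pos (inv_pos.mpr hnx)]
      have hmin' : q x₀ ≤ ‖x‖⁻¹ * q x := by simpa [hqy] using hx₀min hys
      calc q x₀ * ‖x‖ ≤ (‖x‖⁻¹ * q x) * ‖x‖ := mul_le_mul_of_nonneg_right hmin' hnx.le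
        _ = q x := by field_simp

lemma le_inv_of_mul_le_one (c t : ℝ) (hc : 0 < c) (h : c * t ≤ 1) : t ≤ c⁻¹ :=
  le_of_mul_le_mul_left (by rwa [mul_inv_cancel₀ hc.ne']) hc

end helpers

/-- Proposition on compatibility via absolute norms: let `p` be
an absolute norm on `ℝ^N`, `r` an absolute norm fitting `p`, `p⁺` the induced norm
on `S^N`, and `[p⁺]_*`, `r_*` the conjugate norms.  If `V ⪰ 0` and
`V ⪯ W + Diag(w)` with `w ≥ 0` and `[p⁺]_*(W) + r_*(w) ≤ τ`, then `xᵀVx ≤ τ`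
whenever `p(x) ≤ 1`. -/
theorem stmt11
    {N : ℕ}
    (p r : (Fin N → ℝ) → ℝ)
    (p_add : ∀ x y, p (x + y) ≤ p x + p y)
    (p_smul : ∀ (c : ℝ) x, p (c • x) = |c| * p x)
    (p_eq_zero : ∀ x, p x = 0 ↔ x = 0)
    (p_abs : ∀ x, p x = p (fun i => |x i|))
    (r_add : ∀ x y, r (x + y) ≤ r x + r y)
    (r_smul : ∀ (c : ℝ) x, r (c • x) = |c| * r x)
    (r_eq_zero : ∀ x, r x = 0 ↔ x = 0)
    (r_abs : ∀ x, r x = r (fun i => |x i|))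
    -- `r` fits `p`
    (r_fits : ∀ x : Fin N → ℝ, p x ≤ 1 → r (fun i => (x i) ^ 2) ≤ 1)
    (V W : Matrix (Fin N) (Fin N) ℝ) (hV : V.PosSemidef) (hW : W.IsSymm)
    (w : Fin N → ℝ) (hw : ∀ i, 0 ≤ w i)
    (hdom : (W + Matrix.diagonal w - V).PosSemidef)
    (τ : ℝ)
    -- `[p⁺]_*(W) + r_*(w) ≤ τ`, with `p⁺(Y) = p(j ↦ p(Col_j Y))` and the
    -- conjugates taken w.r.t. the Frobenius inner product on `S^N` and the
    -- standard inner product on `ℝ^N`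
    (hτ : sSup ((fun Y : Matrix (Fin N) (Fin N) ℝ => (W * Y).trace) ''
            {Y | Y.IsSymm ∧ p (fun j => p (fun i => Y i j)) ≤ 1})
          + sSup ((fun v => w ⬝ᵥ v) '' {v | r v ≤ 1}) ≤ τ) :
    ∀ x : Fin N → ℝ, p x ≤ 1 → x ⬝ᵥ V.mulVec x ≤ τ := by
  intro x hx
  obtain ⟨cp, hcp, hpL⟩ := q_lower p p_add p_smul p_eq_zero
  obtain ⟨cr, hcr, hrL⟩ := q_lower r r_add r_smul r_eq_zero
  have hpx0 : 0 ≤ p x := q_nonneg p p_add p_smul x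
  -- Step A : xᵀ V x ≤ xᵀ W x + wᵀ [x]²
  have hA : x ⬝ᵥ V.mulVec x ≤ x ⬝ᵥ W.mulVec x + w ⬝ᵥ (fun i => x i ^ 2) := by
    have h0 : 0 ≤ x ⬝ᵥ ((W + Matrix.diagonal w - V).mulVec x) := by
      have := hdom.dotProduct_mulVec_nonneg x
      simpa using this
    have hdg : x ⬝ᵥ (Matrix.diagonal w).mulVec x = w ⬝ᵥ (fun i => x i ^ 2) := by
      simp [dotProduct, Matrix.mulVec_diagonal]
      apply Finset.sum_congr rfl; intro i _; ring
    rw [Matrix.sub_mulVec, Matrix.add_mulVec, dotProduct_sub, dotProduct_add, hdg] at h0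
    linarith
  -- Step B : xᵀ W x ≤ sSup of first set
  set S1 := ((fun Y : Matrix (Fin N) (Fin N) ℝ => (W * Y).trace) ''
      {Y | Y.IsSymm ∧ p (fun j => p (fun i => Y i j)) ≤ 1}) with hS1
  have hBdd1 : BddAbove S1 := by
    refine ⟨∑ i, ∑ j, |W i j| * (cp⁻¹ * cp⁻¹), ?_⟩
    rintro t ⟨Y, ⟨-, hpY⟩, rfl⟩
    have hent : ∀ i j, |Y i j| ≤ cp⁻¹ * cp⁻¹ := by
      intro i j
      set v : Fin N → ℝ := fun j => p (fun i => Y i j) with hv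
      have hv0 : ∀ j, 0 ≤ v j := fun j => q_nonneg p p_add p_smul _
      have hnv : ‖v‖ ≤ cp⁻¹ :=
        le_inv_of_mul_le_one cp ‖v‖ hcp (le_trans (hpL v) hpY)
      have hvj : v j ≤ cp⁻¹ := by
        have := norm_le_pi_norm v j
        rw [Real.norm_eq_abs, abs_of_nonneg (hv0 j)] at this
        linarith
      have hcol : ‖(fun i => Y i j)‖ ≤ cp⁻¹ * cp⁻¹ := by
        have h1 : cp * ‖(fun i => Y i j)‖ ≤ cp⁻¹ := le_trans (hpL _) hvj
        have h2 : cp * (cp⁻¹ * cp⁻¹) = cp⁻¹ := by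
          field_simp
        exact le_of_mul_le_mul_left (by rw [h2]; exact h1) hcp
      have := norm_le_pi_norm (fun i => Y i j) i
      rw [Real.norm_eq_abs] at this
      linarith
    calc (W * Y).trace = ∑ i, ∑ j, W i j * Y j i := by
          simp [Matrix.trace, Matrix.mul_apply, Matrix.diag]
      _ ≤ ∑ i, ∑ j, |W i j| * (cp⁻¹ * cp⁻¹) := by
          apply Finset.sum_le_sum; intro i _
          apply Finset.sum_le_sum; intro j _
          calc W i j * Y j i ≤ |W i j * Y j i| := le_abs_self _
            _ = |W i j| * |Y j i| := abs_mul _ _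
            _ ≤ |W i j| * (cp⁻¹ * cp⁻¹) :=
                mul_le_mul_of_nonneg_left (hent j i) (abs_nonneg _)
  have hmem1 : x ⬝ᵥ W.mulVec x ∈ S1 := by
    refine ⟨vecMulVec x x, ⟨?_, ?_⟩, ?_⟩
    · ext i j
      simp [Matrix.vecMulVec_apply, mul_comm]
    · have hcol : (fun j => p (fun i => (vecMulVec x x) i j)) = fun j => |x j| * p x := by
        funext j
        have : (fun i => (vecMulVec x x) i j) = x j • x := by
          funext i; simp [Matrix.vecMulVec_apply, mul_comm]
        rw [this, p_smul]
      rw [hcol]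
      have h1 : (fun j => |x j| * p x) = (p x) • (fun j => |x j|) := by
        funext j; simp [mul_comm]
      rw [h1, p_smul, abs_of_nonneg hpx0, ← p_abs]
      exact mul_le_one₀ hx hpx0 hx
    · simp only
      simp [Matrix.trace, Matrix.mul_apply, Matrix.vecMulVec_apply, dotProduct,
        Matrix.mulVec, Matrix.diag, Finset.mul_sum]
      apply Finset.sum_congr rfl; intro i _
      apply Finset.sum_congr rfl; intro j _
      ring
  have hB : x ⬝ᵥ W.mulVec x ≤ sSup S1 := le_csSup hBdd1 hmem1
  -- Step C : wᵀ [x]² ≤ sSup of second set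
  set S2 := ((fun v => w ⬝ᵥ v) '' {v | r v ≤ 1}) with hS2
  have hBdd2 : BddAbove S2 := by
    refine ⟨∑ i, |w i| * cr⁻¹, ?_⟩
    rintro t ⟨v, hrv, rfl⟩
    have hnv : ‖v‖ ≤ cr⁻¹ :=
      le_inv_of_mul_le_one cr ‖v‖ hcr (le_trans (hrL v) hrv)
    calc w ⬝ᵥ v = ∑ i, w i * v i := rfl
      _ ≤ ∑ i, |w i| * cr⁻¹ := by
          apply Finset.sum_le_sum; intro i _
          calc w i * v i ≤ |w i * v i| := le_abs_self _
            _ = |w i| * |v i| := abs_mul _ _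
            _ ≤ |w i| * cr⁻¹ := by
                apply mul_le_mul_of_nonneg_left _ (abs_nonneg _)
                have := norm_le_pi_norm v i
                rw [Real.norm_eq_abs] at this
                linarith
  have hmem2 : w ⬝ᵥ (fun i => x i ^ 2) ∈ S2 := ⟨fun i => x i ^ 2, r_fits x hx, rfl⟩
  have hC : w ⬝ᵥ (fun i => x i ^ 2) ≤ sSup S2 := le_csSup hBdd2 hmem2
  linarith
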